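/- arXiv:2012.14166 — 6 statements merged into one kernel-verified Lean document; each statement's English description precedes it below -/
import Mathlib

section
/- Let m ≥ 2 and let G and H be permutation groups on a finite set Ω that have the same orbits on Ω^m. Then for every point α ∈ Ω, the point stabilizers G_α and H_α have the same orbits on Ω^(m-1). -/
/-- Two subgroups of `Perm Ω` have the same orbits on `Ω^m` under the
componentwise action (`m`-equivalence). -/
def SameOrbits {Ω : Type*} (m : ℕ) (G H : Subgroup (Equiv.Perm Ω)) : Prop :=
  ∀ α β : Fin m → Ω,
    (∃ g ∈ G, ∀ i, g (α i) = β i) ↔ (∃ h ∈ H, ∀ i, h (α i) = β i)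

/-- The `m`-closure of `G`: the largest subgroup of `Perm Ω` having the same
orbits as `G` on `Ω^m`. -/
def mClosure {Ω : Type*} (m : ℕ) (G : Subgroup (Equiv.Perm Ω)) :
    Subgroup (Equiv.Perm Ω) :=
  sSup {H | SameOrbits m G H}

private lemma aux_dir {Ω : Type*} (n : ℕ) (G H : Subgroup (Equiv.Perm Ω))
    (h : SameOrbits (n + 1) G H) (α : Ω) (β γ : Fin n → Ω)
    (hg : ∃ g ∈ G ⊓ MulAction.stabilizer (Equiv.Perm Ω) α, ∀ i, g (β i) = γ i) :
    ∃ g ∈ H ⊓ MulAction.stabilizer (Equiv.Perm Ω) α, ∀ i, g (β i) = γ i := by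
  obtain ⟨g, ⟨hgG, hgα⟩, hgβ⟩ := hg
  have hgα' : g α = α := hgα
  have key : ∃ k ∈ H, ∀ i : Fin (n+1), k ((Fin.cons α β : Fin (n+1) → Ω) i) = (Fin.cons α γ : Fin (n+1) → Ω) i := by
    rw [← h]
    exact ⟨g, hgG, fun i => by
      refine Fin.cases ?_ ?_ i
      · simpa using hgα'
      · intro j; simpa using hgβ j⟩
  obtain ⟨k, hkH, hk⟩ := key
  have hkα : k α = α := by simpa using hk 0
  exact ⟨k, ⟨hkH, hkα⟩, fun i => by simpa using hk i.succ⟩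

theorem stmt2 {Ω : Type*} [Fintype Ω] (m : ℕ) (hm : 2 ≤ m)
    (G H : Subgroup (Equiv.Perm Ω)) (h : SameOrbits m G H) (α : Ω) :
    SameOrbits (m - 1) (G ⊓ MulAction.stabilizer (Equiv.Perm Ω) α)
      (H ⊓ MulAction.stabilizer (Equiv.Perm Ω) α) := by
  obtain ⟨n, rfl⟩ : ∃ n, m = n + 1 := ⟨m - 1, (Nat.succ_pred_eq_of_pos (by omega)).symm⟩
  intro β γ
  exact ⟨aux_dir n G H h α β γ, aux_dir n H G (fun a b => (h a b).symm) α β γ⟩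
end

section
/- Let m ≥ 2 and let G be a permutation group on a finite set Ω. If some point stabilizer G_α is (m-1)-closed (i.e., (G_α)^(m-1) = G_α as permutation groups on Ω), then G is m-closed, i.e., G^(m) = G. -/
theorem stmt5 {Ω : Type*} [Fintype Ω] (m : ℕ) (hm : 2 ≤ m)
    (G : Subgroup (Equiv.Perm Ω)) (α : Ω)
    (hstab : mClosure (m - 1) (G ⊓ MulAction.stabilizer (Equiv.Perm Ω) α) =
      G ⊓ MulAction.stabilizer (Equiv.Perm Ω) α) :
    mClosure m G = G := by
  obtain ⟨k, rfl⟩ : ∃ k, m = k + 1 := ⟨m - 1, (Nat.succ_pred_eq_of_pos (by omega)).symm⟩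
  rw [Nat.add_sub_cancel] at hstab
  set Gα := G ⊓ MulAction.stabilizer (Equiv.Perm Ω) α with hGα
  apply le_antisymm
  · apply sSup_le
    intro H hH h hh
    obtain ⟨g₀, hg₀G, hg₀⟩ := (hH (fun _ => α) (fun _ => h α)).mpr ⟨h, hh, fun i => rfl⟩
    have hg₀α : g₀ α = h α := hg₀ 0
    set h' := g₀⁻¹ * h with hh'
    have key : ∀ x : Fin k → Ω, ∃ g ∈ Gα, ∀ i, g (x i) = h' (x i) := by
      intro x
      obtain ⟨g, hgG, hg⟩ := (hH (Fin.cons α x) (Fin.cons (h α) (fun i => h (x i)))).mpr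
        ⟨h, hh, fun i => by refine Fin.cases ?_ ?_ i <;> simp⟩
      have hgα : g α = h α := by simpa using hg 0
      refine ⟨g₀⁻¹ * g, ⟨G.mul_mem (G.inv_mem hg₀G) hgG, ?_⟩, fun i => ?_⟩
      · show g₀⁻¹ (g α) = α
        rw [hgα, ← hg₀α, Equiv.Perm.inv_eq_iff_eq]
      · have h1 : g (x i) = h (x i) := hg i.succ
        show g₀⁻¹ (g (x i)) = g₀⁻¹ (h (x i))
        rw [h1]
    -- the subgroup generated by Gα and h' has the same orbits as Gα on Ω^k
    set K := Subgroup.closure (insert h' (Gα : Set (Equiv.Perm Ω))) with hK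
    have hP : ∀ kk ∈ K, ∀ x : Fin k → Ω, ∃ g ∈ Gα, ∀ i, g (x i) = kk (x i) := by
      intro kk hkk
      induction hkk using Subgroup.closure_induction with
      | mem a ha =>
        rcases ha with rfl | ha
        · exact key
        · exact fun x => ⟨a, ha, fun i => rfl⟩
      | one => exact fun x => ⟨1, one_mem _, fun i => rfl⟩
      | mul a b _ _ ia ib =>
        intro x
        obtain ⟨gb, hgb, hbx⟩ := ib x
        obtain ⟨ga, hga, hax⟩ := ia (fun i => b (x i))
        refine ⟨ga * gb, mul_mem hga hgb, fun i => ?_⟩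
        simp [Equiv.Perm.mul_apply, hbx i, hax i]
      | inv a _ ia =>
        intro x
        obtain ⟨g, hg, hgx⟩ := ia (fun i => a⁻¹ (x i))
        refine ⟨g⁻¹, Gα.inv_mem hg, fun i => ?_⟩
        have h1 : g (a⁻¹ (x i)) = x i := by
          have := hgx i; rwa [show a (a⁻¹ (x i)) = x i from Equiv.Perm.eq_inv_iff_eq.mp rfl] at this
        calc g⁻¹ (x i) = g⁻¹ (g (a⁻¹ (x i))) := by rw [h1]
          _ = a⁻¹ (x i) := Equiv.Perm.inv_eq_iff_eq.mpr rfl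
    have hSO : SameOrbits k Gα K := by
      intro x y
      constructor
      · rintro ⟨g, hg, hgx⟩
        exact ⟨g, Subgroup.subset_closure (Set.mem_insert_of_mem _ hg), hgx⟩
      · rintro ⟨kk, hkk, hkx⟩
        obtain ⟨g, hg, hgx⟩ := hP kk hkk x
        exact ⟨g, hg, fun i => (hgx i).trans (hkx i)⟩
    have hKle : K ≤ Gα := by
      rw [← hstab]
      exact le_sSup hSO
    have hh'G : h' ∈ G := (inf_le_left : Gα ≤ G)
      (hKle (Subgroup.subset_closure (Set.mem_insert _ _)))
    have : h = g₀ * h' := by rw [hh']; group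
    rw [this]
    exact mul_mem hg₀G hh'G
  · exact le_sSup (fun x y => Iff.rfl)
end

section
/- Let m ≥ 2 and let G be a permutation group on a finite set Ω. If some (m-1)-point stabilizer of G (the pointwise stabilizer of some m-1 points) has a faithful regular orbit on Ω, then G is (m+1)-closed. -/
theorem stmt6 {Ω : Type*} [Fintype Ω] (m : ℕ) (hm : 2 ≤ m)
    (G : Subgroup (Equiv.Perm Ω)) (β : Fin (m - 1) → Ω)
    -- the pointwise stabilizer of the points `β 0, …, β (m-2)` has a faithful
    -- regular orbit: some point has trivial stabilizer in it
    (hreg : ∃ α : Ω,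
      ∀ g ∈ G ⊓ ⨅ i, MulAction.stabilizer (Equiv.Perm Ω) (β i),
        g α = α → g = 1) :
    mClosure (m + 1) G = G := by
  obtain ⟨α, hα⟩ := hreg
  apply le_antisymm
  · apply sSup_le
    intro H hH h hh
    -- tuple (β₀, …, β_{m-2}, α, ω)
    set t : Ω → Fin (m + 1) → Ω := fun ω i =>
      if hi : (i : ℕ) < m - 1 then β ⟨i, hi⟩ else if (i : ℕ) = m - 1 then α else ω with ht
    have key : ∀ ω : Ω, ∃ g ∈ G, ∀ i : Fin (m + 1), g (t ω i) = h (t ω i) := by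
      intro ω
      exact (hH (t ω) (fun i => h (t ω i))).mpr ⟨h, hh, fun i => rfl⟩
    choose g hgG hg using key
    have hβ : ∀ (ω : Ω) (i : Fin (m - 1)), g ω (β i) = h (β i) := by
      intro ω i
      have hi : (i : ℕ) < m - 1 := i.isLt
      have := hg ω ⟨(i : ℕ), by omega⟩
      simpa [ht, hi] using this
    have hαeq : ∀ ω : Ω, g ω α = h α := by
      intro ω
      have := hg ω ⟨m - 1, by omega⟩
      simpa [ht] using this
    have hωeq : ∀ ω : Ω, g ω ω = h ω := by
      intro ω
      have := hg ω ⟨m, by omega⟩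
      have h1 : ¬ (m < m - 1) := by omega
      have h2 : ¬ (m = m - 1) := by omega
      simpa [ht, h1, h2] using this
    set g0 := g α with hg0
    have hsame : ∀ ω : Ω, g ω = g0 := by
      intro ω
      have hk : g0⁻¹ * g ω ∈ G ⊓ ⨅ i, MulAction.stabilizer (Equiv.Perm Ω) (β i) := by
        refine Subgroup.mem_inf.mpr ⟨mul_mem (inv_mem (hgG α)) (hgG ω), ?_⟩
        rw [Subgroup.mem_iInf]
        intro i
        rw [MulAction.mem_stabilizer_iff]
        show (g0⁻¹ * g ω) (β i) = β i
        rw [Equiv.Perm.mul_apply, hβ ω i, ← hβ α i, Equiv.Perm.coe_inv, Equiv.symm_apply_apply]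
      have hkα : (g0⁻¹ * g ω) α = α := by
        rw [Equiv.Perm.mul_apply, hαeq ω, ← hαeq α, Equiv.Perm.coe_inv, Equiv.symm_apply_apply]
      have := hα _ hk hkα
      have := inv_mul_eq_one.mp this
      exact this.symm
    have : h = g0 := by
      refine Equiv.ext fun ω => ?_
      rw [← hωeq ω, hsame ω]
    rw [this]
    exact hgG α
  · exact le_sSup (fun _ _ => Iff.rfl)
end

section
/- Let G be a solvable subgroup of AΓL(1, p^d) acting on the affine line over GF(p^d). Then the 3-closure of G is solvable. In particular, AΓL(1, p^d) itself is 3-closed, given that its point stabilizer ΓL(1, p^d) is 2-closed. -/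
/-- `f` is an element of `AΓL(1, q)` on the finite field `F = GF(q)`:
`f x = a * σ(x) + b` with `a ≠ 0` and `σ` a field automorphism. -/
def IsAGammaL1 {F : Type*} [Field F] (f : Equiv.Perm F) : Prop :=
  ∃ (a b : F) (σ : F ≃+* F), a ≠ 0 ∧ ∀ x, f x = a * σ x + b

/-- `f` is an element of `ΓL(1, q)`: `f x = a * σ(x)` with `a ≠ 0`. -/
def IsGammaL1 {F : Type*} [Field F] (f : Equiv.Perm F) : Prop :=
  ∃ (a : F) (σ : F ≃+* F), a ≠ 0 ∧ ∀ x, f x = a * σ x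

section PtClosure
variable {Ω : Type*}

def ptClosure (m : ℕ) (G : Subgroup (Equiv.Perm Ω)) : Subgroup (Equiv.Perm Ω) where
  carrier := {g | ∀ α : Fin m → Ω, ∃ h ∈ G, ∀ i, h (α i) = g (α i)}
  one_mem' := fun _ => ⟨1, one_mem G, fun _ => rfl⟩
  mul_mem' := by
    intro a b ha hb α
    obtain ⟨hb', hbG, hbe⟩ := hb α
    obtain ⟨ha', haG, hae⟩ := ha (fun i => b (α i))
    exact ⟨ha' * hb', mul_mem haG hbG, fun i => by
      rw [Equiv.Perm.mul_apply, Equiv.Perm.mul_apply, hbe i, hae i]⟩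
  inv_mem' := by
    intro a ha α
    obtain ⟨h, hG, he⟩ := ha (fun i => a⁻¹ (α i))
    refine ⟨h⁻¹, inv_mem hG, fun i => ?_⟩
    rw [Equiv.Perm.inv_def, Equiv.symm_apply_eq, he i, Equiv.Perm.coe_inv, Equiv.apply_symm_apply]

lemma sameOrbits_ptClosure (m : ℕ) (G : Subgroup (Equiv.Perm Ω)) :
    SameOrbits m G (ptClosure m G) := by
  intro α β
  constructor
  · rintro ⟨g, hg, he⟩
    exact ⟨g, fun _ => ⟨g, hg, fun _ => rfl⟩, he⟩
  · rintro ⟨h, hP, he⟩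
    obtain ⟨g, hg, he'⟩ := hP α
    exact ⟨g, hg, fun i => (he' i).trans (he i)⟩

lemma mClosure_eq (m : ℕ) (G : Subgroup (Equiv.Perm Ω)) :
    mClosure m G = ptClosure m G := by
  refine le_antisymm (sSup_le fun H hH g hg α => ?_) (le_sSup (sameOrbits_ptClosure m G))
  exact (hH α (fun i => g (α i))).mpr ⟨g, hg, fun _ => rfl⟩

lemma mem_mClosure {m : ℕ} {G : Subgroup (Equiv.Perm Ω)} {g : Equiv.Perm Ω} :
    g ∈ mClosure m G ↔ ∀ α : Fin m → Ω, ∃ h ∈ G, ∀ i, h (α i) = g (α i) := by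
  rw [mClosure_eq]; rfl

lemma le_mClosure (m : ℕ) (G : Subgroup (Equiv.Perm Ω)) : G ≤ mClosure m G :=
  fun g hg => mem_mClosure.mpr fun _ => ⟨g, hg, fun _ => rfl⟩

lemma mClosure_mono {m : ℕ} {G G' : Subgroup (Equiv.Perm Ω)} (h : G ≤ G') :
    mClosure m G ≤ mClosure m G' := by
  intro g hg
  rw [mem_mClosure] at hg ⊢
  exact fun α => let ⟨k, hk, he⟩ := hg α; ⟨k, h hk, he⟩

end PtClosure

section Subgroups
variable (F : Type*) [Field F]

def aGammaLSub : Subgroup (Equiv.Perm F) where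
  carrier := {f | IsAGammaL1 f}
  one_mem' := ⟨1, 0, RingEquiv.refl F, one_ne_zero, fun x => by simp⟩
  mul_mem' := by
    rintro f g ⟨a, b, σ, ha, hf⟩ ⟨a', b', σ', ha', hg⟩
    refine ⟨a * σ a', a * σ b' + b, σ'.trans σ,
      mul_ne_zero ha (by simp [ha']), fun x => ?_⟩
    simp only [Equiv.Perm.mul_apply, hg x, hf, map_add, map_mul, RingEquiv.coe_trans,
      Function.comp_apply]
    ring
  inv_mem' := by
    rintro f ⟨a, b, σ, ha, hf⟩
    refine ⟨σ.symm a⁻¹, -σ.symm (a⁻¹ * b), σ.symm, by simp [ha], fun x => ?_⟩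
    rw [Equiv.Perm.inv_def, Equiv.symm_apply_eq, hf]
    rw [map_add, map_mul, map_neg, RingEquiv.apply_symm_apply, RingEquiv.apply_symm_apply,
      RingEquiv.apply_symm_apply]
    field_simp
    ring

def gammaLSub : Subgroup (Equiv.Perm F) where
  carrier := {f | IsGammaL1 f}
  one_mem' := ⟨1, RingEquiv.refl F, one_ne_zero, fun x => by simp⟩
  mul_mem' := by
    rintro f g ⟨a, σ, ha, hf⟩ ⟨a', σ', ha', hg⟩
    refine ⟨a * σ a', σ'.trans σ, mul_ne_zero ha (by simp [ha']), fun x => ?_⟩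
    simp only [Equiv.Perm.mul_apply, hg x, hf, map_mul, RingEquiv.coe_trans,
      Function.comp_apply]
    ring
  inv_mem' := by
    rintro f ⟨a, σ, ha, hf⟩
    refine ⟨σ.symm a⁻¹, σ.symm, by simp [ha], fun x => ?_⟩
    rw [Equiv.Perm.inv_def, Equiv.symm_apply_eq, hf]
    rw [map_mul, RingEquiv.apply_symm_apply, RingEquiv.apply_symm_apply]
    field_simp

def affSub : Subgroup (Equiv.Perm F) where
  carrier := {f | ∃ a b : F, a ≠ 0 ∧ ∀ x, f x = a * x + b}
  one_mem' := ⟨1, 0, one_ne_zero, fun x => by simp⟩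
  mul_mem' := by
    rintro f g ⟨a, b, ha, hf⟩ ⟨a', b', ha', hg⟩
    refine ⟨a * a', a * b' + b, mul_ne_zero ha ha', fun x => ?_⟩
    simp only [Equiv.Perm.mul_apply, hg x, hf]
    ring
  inv_mem' := by
    rintro f ⟨a, b, ha, hf⟩
    refine ⟨a⁻¹, -(a⁻¹ * b), ha.isUnit.inv.ne_zero, fun x => ?_⟩
    rw [Equiv.Perm.inv_def, Equiv.symm_apply_eq, hf]
    field_simp
    ring

def transSub : Subgroup (Equiv.Perm F) where
  carrier := {f | ∃ b : F, ∀ x, f x = x + b}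
  one_mem' := ⟨0, fun x => by simp⟩
  mul_mem' := by
    rintro f g ⟨b, hf⟩ ⟨b', hg⟩
    refine ⟨b' + b, fun x => ?_⟩
    simp only [Equiv.Perm.mul_apply, hg x, hf]
    ring
  inv_mem' := by
    rintro f ⟨b, hf⟩
    refine ⟨-b, fun x => ?_⟩
    rw [Equiv.Perm.inv_def, Equiv.symm_apply_eq, hf]
    ring

lemma trans_le_aff : transSub F ≤ affSub F := by
  rintro f ⟨b, hf⟩
  exact ⟨1, b, one_ne_zero, fun x => by rw [hf x, one_mul]⟩

lemma aff_le_aGammaL : affSub F ≤ aGammaLSub F := by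
  rintro f ⟨a, b, ha, hf⟩
  exact ⟨a, b, RingEquiv.refl F, ha, fun x => by rw [hf x]; rfl⟩

lemma gammaL_le_aGammaL : gammaLSub F ≤ aGammaLSub F := by
  rintro f ⟨a, σ, ha, hf⟩
  exact ⟨a, 0, σ, ha, fun x => by rw [hf x, add_zero]⟩

end Subgroups

section Solvable
variable {F : Type*} [Field F]

lemma rep_unique {a a' b b' : F} {σ σ' : F ≃+* F} (ha : a ≠ 0)
    (h : ∀ x, a * σ x + b = a' * σ' x + b') : a = a' ∧ b = b' ∧ σ = σ' := by
  have hb : b = b' := by have := h 0; simpa using this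
  have h' : ∀ x, a * σ x = a' * σ' x := fun x => by
    have := h x; rw [hb] at this; exact add_right_cancel this
  have haa : a = a' := by have := h' 1; simpa using this
  refine ⟨haa, hb, RingEquiv.ext fun x => ?_⟩
  apply mul_left_cancel₀ ha
  rw [h' x, haa]

open Classical in
noncomputable def sigmaOf (f : Equiv.Perm F) : RingAut F :=
  if h : IsAGammaL1 f then h.choose_spec.choose_spec.choose else RingEquiv.refl F

lemma sigmaOf_eq {f : Equiv.Perm F} {a b : F} {σ : F ≃+* F} (ha : a ≠ 0)
    (hf : ∀ x, f x = a * σ x + b) : sigmaOf f = σ := by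
  have h : IsAGammaL1 f := ⟨a, b, σ, ha, hf⟩
  rw [sigmaOf]
  rw [dif_pos h]
  obtain ⟨ha', hf'⟩ := h.choose_spec.choose_spec.choose_spec
  exact (rep_unique ha' fun x => (hf' x).symm.trans (hf x)).2.2

lemma sigmaOf_spec {f : Equiv.Perm F} (h : IsAGammaL1 f) :
    ∃ a b : F, a ≠ 0 ∧ ∀ x, f x = a * sigmaOf f x + b := by
  obtain ⟨a, b, σ, ha, hf⟩ := h
  exact ⟨a, b, ha, by rw [sigmaOf_eq ha hf]; exact hf⟩

noncomputable def pi3 : aGammaLSub F →* RingAut F where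
  toFun f := sigmaOf f.1
  map_one' := by
    have : sigmaOf (1 : Equiv.Perm F) = RingEquiv.refl F :=
      sigmaOf_eq (a := 1) (b := 0) one_ne_zero (fun x => by simp)
    exact this
  map_mul' f g := by
    obtain ⟨a, b, ha, hf⟩ := sigmaOf_spec f.2
    obtain ⟨a', b', ha', hg⟩ := sigmaOf_spec g.2
    have key : ∀ x, ((f * g : aGammaLSub F) : Equiv.Perm F) x =
        (a * sigmaOf f.1 a') * (sigmaOf f.1 * sigmaOf g.1) x + (a * sigmaOf f.1 b' + b) := by
      intro x
      have : ((f * g : aGammaLSub F) : Equiv.Perm F) x = f.1 (g.1 x) := rfl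
      rw [this, hg x, hf, map_add, map_mul]
      have : (sigmaOf f.1 * sigmaOf g.1) x = sigmaOf f.1 (sigmaOf g.1 x) := rfl
      rw [this]; ring
    exact sigmaOf_eq (mul_ne_zero ha (by simp [ha'])) key

def pi2 : affSub F →* Fˣ where
  toFun f := Units.mk0 (f.1 1 - f.1 0)
    (by obtain ⟨a, b, ha, hf⟩ := f.2; rw [hf, hf]; simpa using ha)
  map_one' := by
    apply Units.ext; simp
  map_mul' f g := by
    apply Units.ext
    obtain ⟨a, b, ha, hf⟩ := f.2
    obtain ⟨a', b', ha', hg⟩ := g.2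
    have h1 : ((f * g : affSub F) : Equiv.Perm F) 1 = f.1 (g.1 1) := rfl
    have h0 : ((f * g : affSub F) : Equiv.Perm F) 0 = f.1 (g.1 0) := rfl
    simp only [Units.val_mul, Units.val_mk0, h1, h0, hg, hf]
    ring

lemma transSub_solvable : IsSolvable (transSub F) := by
  apply isSolvable_of_comm
  rintro ⟨f, bf, hf⟩ ⟨g, bg, hg⟩
  apply Subtype.ext
  apply Equiv.ext
  intro x
  have h1 : (f * g) x = f (g x) := rfl
  have h2 : (g * f) x = g (f x) := rfl
  show (f * g) x = (g * f) x
  rw [h1, h2, hg x, hf, hf x, hg]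
  ring

lemma affSub_solvable : IsSolvable (affSub F) := by
  haveI : Group.IsSolvable (transSub F) := transSub_solvable (F := F)
  refine solvable_of_ker_le_range (Subgroup.inclusion (trans_le_aff F)) pi2 ?_
  rintro ⟨f, a, b, ha, hf⟩ hker
  have h1 : f 1 - f 0 = 1 := by
    have := congrArg Units.val hker
    simpa [pi2] using this
  have ha1 : a = 1 := by rw [hf, hf] at h1; simpa using h1
  have hmem : f ∈ transSub F := ⟨b, fun x => by rw [hf x, ha1, one_mul]⟩
  exact ⟨⟨f, hmem⟩, rfl⟩

end Solvable



lemma ringAut_solvable {F : Type*} [Field F] [Fintype F] : IsSolvable (RingAut F) := by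
  classical
  set p := ringChar F with hp
  haveI hpf : Fact p.Prime := ⟨CharP.char_is_prime F p⟩
  letI : Algebra (ZMod p) F := ZMod.algebra F p
  let j : RingAut F →* (F ≃ₐ[ZMod p] F) :=
    { toFun := fun σ => AlgEquiv.ofRingEquiv (f := σ)
        (fun r => RingHom.congr_fun
          (Subsingleton.elim ((σ : F ≃+* F).toRingHom.comp (algebraMap (ZMod p) F))
            (algebraMap (ZMod p) F)) r)
      map_one' := rfl
      map_mul' := fun _ _ => rfl }
  have hj : Function.Injective j := by
    intro σ τ h
    exact RingEquiv.ext fun x => AlgEquiv.ext_iff.mp h x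
  suffices hs : IsSolvable (F ≃ₐ[ZMod p] F) by
    exact solvable_of_solvable_injective hj
  -- Frobenius
  let φ : RingAut F := RingEquiv.ofBijective (frobenius F p)
    (Finite.injective_iff_bijective.mp (frobenius F p).injective)
  have hφ : ∀ x : F, (j φ) x = x ^ p := fun _ => rfl
  have hpow : ∀ (k : ℕ) (x : F), ((j φ) ^ k) x = x ^ p ^ k := by
    intro k
    induction k with
    | zero => intro x; simp
    | succ k ih =>
      intro x
      have h1 : ((j φ) ^ (k + 1)) x = ((j φ) ^ k) ((j φ) x) := by
        rw [pow_succ]; rfl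
      rw [h1, hφ, ih, ← pow_mul, ← pow_succ']
  set d := Module.finrank (ZMod p) F with hd
  have hcardF : Fintype.card F = p ^ d := by
    rw [Module.card_eq_pow_finrank (K := ZMod p) (V := F), ZMod.card]
  have h1 : (j φ) ^ d = 1 := by
    apply AlgEquiv.ext
    intro x
    rw [hpow, ← hcardF]
    exact FiniteField.pow_card x
  have hdvd : orderOf (j φ) ∣ d := orderOf_dvd_of_pow_eq_one h1
  have hordpos : 0 < orderOf (j φ) := orderOf_pos (j φ)
  have hled : d ≤ orderOf (j φ) := by
    set k := orderOf (j φ) with hk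
    have hroots : ∀ x : F, x ^ p ^ k = x := by
      intro x
      have := pow_orderOf_eq_one (j φ)
      calc x ^ p ^ k = ((j φ) ^ k) x := (hpow k x).symm
        _ = x := by rw [this]; rfl
    have hone_lt : 1 < p ^ k := Nat.one_lt_pow hordpos.ne' hpf.out.one_lt
    set P : Polynomial F := Polynomial.X ^ (p ^ k) - Polynomial.X with hP
    have hdeg : P.natDegree = p ^ k :=
      FiniteField.X_pow_card_sub_X_natDegree_eq F hone_lt
    have hP0 : P ≠ 0 := by
      intro h
      rw [h, Polynomial.natDegree_zero] at hdeg
      omega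
    have hmem : ∀ x : F, x ∈ P.roots.toFinset := by
      intro x
      rw [Multiset.mem_toFinset, Polynomial.mem_roots hP0]
      simp [hP, Polynomial.IsRoot, sub_eq_zero, hroots x]
    have hle : Fintype.card F ≤ p ^ k := by
      calc Fintype.card F = Finset.univ.card := rfl
        _ ≤ P.roots.toFinset.card := Finset.card_le_card (fun x _ => hmem x)
        _ ≤ Multiset.card P.roots := P.roots.toFinset_card_le
        _ ≤ P.natDegree := P.card_roots'
        _ = p ^ k := hdeg
    rw [hcardF] at hle
    exact (Nat.pow_le_pow_iff_right hpf.out.one_lt).mp hle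
  have hdpos : 0 < d := Module.finrank_pos
  have horder : orderOf (j φ) = d := le_antisymm (Nat.le_of_dvd (hdpos) hdvd) hled
  haveI : IsCyclic (F ≃ₐ[ZMod p] F) := by
    apply isCyclic_of_orderOf_eq_card (j φ)
    rw [horder, IsGalois.card_aut_eq_finrank]
  exact isSolvable_of_comm fun a b => (IsCyclic.commGroup (α := F ≃ₐ[ZMod p] F)).mul_comm a b

lemma aGammaLSub_solvable {F : Type*} [Field F] [Fintype F] : IsSolvable (aGammaLSub F) := by
  haveI : Group.IsSolvable (affSub F) := affSub_solvable (F := F)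
  haveI : Group.IsSolvable (RingAut F) := ringAut_solvable (F := F)
  refine solvable_of_ker_le_range (Subgroup.inclusion (aff_le_aGammaL F)) pi3 ?_
  rintro f hker
  have hσ : sigmaOf f.1 = 1 := hker
  obtain ⟨a, b, ha, hf⟩ := sigmaOf_spec f.2
  rw [hσ] at hf
  have hmem : f.1 ∈ affSub F := ⟨a, b, ha, fun x => hf x⟩
  exact ⟨⟨f.1, hmem⟩, rfl⟩

theorem stmt10 {F : Type*} [Field F] [Fintype F]
    -- the point stabilizer `ΓL(1, q)` of `0` is 2-closed
    (hGammaL : ∀ K : Subgroup (Equiv.Perm F),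
      (∀ f, f ∈ K ↔ IsGammaL1 f) → mClosure 2 K = K) :
    -- the 3-closure of any solvable subgroup of `AΓL(1, q)` is solvable
    (∀ G : Subgroup (Equiv.Perm F), IsSolvable G →
      (∀ f ∈ G, IsAGammaL1 f) → IsSolvable (mClosure 3 G)) ∧
    -- in particular, `AΓL(1, q)` itself is 3-closed
    ∀ H : Subgroup (Equiv.Perm F),
      (∀ f, f ∈ H ↔ IsAGammaL1 f) → mClosure 3 H = H := by
  have key : ∀ H : Subgroup (Equiv.Perm F),
      (∀ f, f ∈ H ↔ IsAGammaL1 f) → mClosure 3 H = H := by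
    intro H hH
    refine le_antisymm ?_ (le_mClosure 3 H)
    intro g hg
    rw [mem_mClosure] at hg
    obtain ⟨h, hhH, hh0⟩ := hg (fun _ => (0 : F))
    have hkK : (h⁻¹ * g) ∈ mClosure 2 (gammaLSub F) := by
      rw [mem_mClosure]
      intro β
      obtain ⟨h', hh', he⟩ := hg (Fin.cases 0 β)
      have h'0 : h' 0 = g 0 := by simpa using he 0
      have hfix : (h⁻¹ * h') 0 = 0 := by
        rw [Equiv.Perm.mul_apply, h'0, ← hh0 0, Equiv.Perm.coe_inv, Equiv.symm_apply_apply]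
      have hmemH : h⁻¹ * h' ∈ H := mul_mem (inv_mem hhH) hh'
      obtain ⟨a, b, σ, ha, hf⟩ := (hH _).mp hmemH
      have hb : b = 0 := by
        have := hf 0
        rw [hfix, map_zero, mul_zero, zero_add] at this
        exact this.symm
      refine ⟨h⁻¹ * h', ⟨a, σ, ha, fun x => by rw [hf x, hb, add_zero]⟩, fun i => ?_⟩
      rw [Equiv.Perm.mul_apply, Equiv.Perm.mul_apply]
      congr 1
      simpa using he i.succ
    rw [hGammaL _ (fun _ => Iff.rfl)] at hkK
    have hk : h⁻¹ * g ∈ H := by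
      obtain ⟨a, σ, ha, hf⟩ := hkK
      exact (hH _).mpr ⟨a, 0, σ, ha, fun x => by rw [hf x, add_zero]⟩
    have := mul_mem hhH hk
    simpa using this
  refine ⟨?_, key⟩
  intro G _ hG
  have hle : mClosure 3 G ≤ aGammaLSub F := by
    refine le_trans (mClosure_mono (fun f hf => show f ∈ aGammaLSub F from hG f hf)) ?_
    exact le_of_eq (key (aGammaLSub F) (fun _ => Iff.rfl))
  haveI : Group.IsSolvable (aGammaLSub F) := aGammaLSub_solvable (F := F)
  exact solvable_of_solvable_injective (Subgroup.inclusion_injective hle)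
end

section
/- Every element of the 2-closure of the wreath product Sym(Γ) ↑ Sym(Δ) in product action on Γ^Δ is itself an element of Sym(Γ) ↑ Sym(Δ); that is, Sym(Γ) wr Sym(Δ) in product action is 2-closed (for |Γ| ≥ 3). -/
namespace WPA

open Function Finset

variable {Γ Δ : Type*} [Fintype Δ] [DecidableEq Γ] [DecidableEq Δ]

/-- The set of coordinates where `x` and `y` differ. -/
def Dset (x y : Δ → Γ) : Finset Δ := Finset.univ.filter fun δ => x δ ≠ y δ

lemma mem_Dset {x y : Δ → Γ} {δ : Δ} : δ ∈ Dset x y ↔ x δ ≠ y δ := by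
  simp [Dset]

/-- `x` and `y` differ exactly at `δ`. -/
def E (x y : Δ → Γ) (δ : Δ) : Prop := x δ ≠ y δ ∧ ∀ ε, ε ≠ δ → x ε = y ε

lemma E.unique {x y : Δ → Γ} {δ δ' : Δ} (h : E x y δ) (h' : E x y δ') : δ = δ' := by
  by_contra hne
  exact h'.1 (h.2 δ' (Ne.symm hne))

lemma E.symm' {x y : Δ → Γ} {δ : Δ} (h : E x y δ) : E y x δ :=
  ⟨Ne.symm h.1, fun ε hε => (h.2 ε hε).symm⟩

lemma Dset_eq_singleton {x y : Δ → Γ} {δ : Δ} (h : E x y δ) : Dset x y = {δ} := by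
  ext ζ
  simp only [mem_Dset, Finset.mem_singleton]
  constructor
  · intro hz; by_contra hzδ; exact hz (h.2 ζ hzδ)
  · rintro rfl; exact h.1

lemma card_one_E {x y : Δ → Γ} (h : (Dset x y).card = 1) : ∃ δ, E x y δ := by
  obtain ⟨δ, hδ⟩ := Finset.card_eq_one.1 h
  refine ⟨δ, ?_, ?_⟩
  · exact mem_Dset.1 (hδ ▸ Finset.mem_singleton_self δ)
  · intro ε hε
    by_contra h'
    have : ε ∈ Dset x y := mem_Dset.2 h'
    rw [hδ, Finset.mem_singleton] at this
    exact hε this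

lemma E_update {x : Δ → Γ} {δ : Δ} {c : Γ} (hc : c ≠ x δ) : E x (Function.update x δ c) δ := by
  constructor
  · rw [Function.update_self]; exact Ne.symm hc
  · intro ε hε; exact (Function.update_of_ne hε c x).symm

lemma Dset_empty_iff {x y : Δ → Γ} : Dset x y = ∅ ↔ x = y := by
  constructor
  · intro h; funext ζ
    by_contra hz
    have : ζ ∈ Dset x y := mem_Dset.2 hz
    rw [h] at this; exact absurd this (Finset.notMem_empty ζ)
  · rintro rfl; ext ζ; simp [mem_Dset]

theorem key [Fintype Γ] (hcard : 1 < Fintype.card Γ) (f : (Δ → Γ) → (Δ → Γ))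
    (hd : ∀ x y, (Dset (f x) (f y)).card = (Dset x y).card) :
    ∃ (k : Δ → Equiv.Perm Γ) (l : Equiv.Perm Δ),
      ∀ (x : Δ → Γ) (δ : Δ), f x δ = k δ (x (l⁻¹ δ)) := by
  have hΓne : Nonempty Γ := Fintype.card_pos_iff.mp (by omega)
  have hex : ∀ a : Γ, ∃ b, b ≠ a := Fintype.exists_ne_of_one_lt_card hcard
  -- neighbors map to neighbors
  have hnb : ∀ (x y : Δ → Γ) (δ : Δ), E x y δ → ∃ ε, E (f x) (f y) ε := by
    intro x y δ hE
    apply card_one_E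
    rw [hd, Dset_eq_singleton hE, Finset.card_singleton]
  -- direction independence of the target coordinate
  have hS1 : ∀ (x : Δ → Γ) (δ : Δ) (c c' : Γ) (ε ε' : Δ), c ≠ x δ → c' ≠ x δ →
      E (f x) (f (update x δ c)) ε → E (f x) (f (update x δ c')) ε' → ε = ε' := by
    intro x δ c c' ε ε' hc hc' hE hE'
    by_cases hcc : c = c'
    · subst hcc; exact hE.unique hE'
    · by_contra hne
      have hEyy' : E (update x δ c) (update x δ c') δ := by
        constructor
        · rw [Function.update_self, Function.update_self]; exact hcc
        · intro ζ hζ; rw [Function.update_of_ne hζ, Function.update_of_ne hζ]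
      obtain ⟨ε'', hE''⟩ := hnb _ _ δ hEyy'
      have h1 : f (update x δ c) ε ≠ f (update x δ c') ε := by
        rw [← hE'.2 ε hne]; exact Ne.symm hE.1
      have h2 : f (update x δ c) ε' ≠ f (update x δ c') ε' := by
        rw [← hE.2 ε' (Ne.symm hne)]; exact hE'.1
      rcases ne_or_eq ε ε'' with h | h
      · exact h1 (hE''.2 ε h)
      · subst h; exact h2 (hE''.2 ε' (Ne.symm hne))
  -- the direction map σ
  have hσex : ∀ (x : Δ → Γ) (δ : Δ), ∃ ε, ∀ c, c ≠ x δ → E (f x) (f (update x δ c)) ε := by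
    intro x δ
    obtain ⟨c₀, hc₀⟩ := hex (x δ)
    obtain ⟨ε, hε⟩ := hnb x (update x δ c₀) δ (E_update hc₀)
    refine ⟨ε, fun c hc => ?_⟩
    obtain ⟨ε', hε'⟩ := hnb x (update x δ c) δ (E_update hc)
    rwa [hS1 x δ c₀ c ε ε' hc₀ hc hε hε']
  choose σ hσ using hσex
  -- injectivity of σ x
  have hσi : ∀ x : Δ → Γ, Function.Injective (σ x) := by
    intro x δ δ' heq
    by_contra hne
    obtain ⟨c, hc⟩ := hex (x δ)
    obtain ⟨c', hc'⟩ := hex (x δ')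
    have hD : Dset (update x δ c) (update x δ' c') = {δ, δ'} := by
      ext ζ
      simp only [mem_Dset, Finset.mem_insert, Finset.mem_singleton]
      by_cases h1 : ζ = δ
      · subst h1
        rw [Function.update_self, Function.update_of_ne hne]
        simpa using hc
      · by_cases h2 : ζ = δ'
        · subst h2
          rw [Function.update_of_ne (Ne.symm hne), Function.update_self]
          simpa [h1] using Ne.symm hc'
        · rw [Function.update_of_ne h1, Function.update_of_ne h2]
          simp [h1, h2]
    have hc2 : (Dset (f (update x δ c)) (f (update x δ' c'))).card = 2 := by
      rw [hd, hD, Finset.card_pair hne]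
    have hsub : Dset (f (update x δ c)) (f (update x δ' c')) ⊆ {σ x δ} := by
      intro ζ hζ
      rw [Finset.mem_singleton]
      by_contra hζ'
      have e1 := (hσ x δ c hc).2 ζ hζ'
      have e2 := (hσ x δ' c' hc').2 ζ (heq ▸ hζ')
      exact (mem_Dset.1 hζ) (e1.symm.trans e2)
    have := Finset.card_le_card hsub
    rw [hc2, Finset.card_singleton] at this
    omega
  -- symmetry: direction is mutual
  have hσs : ∀ (x : Δ → Γ) (δ : Δ) (c : Γ), c ≠ x δ → σ (update x δ c) δ = σ x δ := by
    intro x δ c hc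
    have hx : update (update x δ c) δ (x δ) = x := by
      rw [Function.update_idem, Function.update_eq_self]
    have hne : x δ ≠ update x δ c δ := by rw [Function.update_self]; exact Ne.symm hc
    have h1 := hσ (update x δ c) δ (x δ) (by rw [Function.update_self]; exact Ne.symm hc)
    rw [hx] at h1
    exact (h1.symm').unique (hσ x δ c hc)
  -- the square lemma: σ is constant on neighbors
  have hsq : ∀ (x : Δ → Γ) (δ : Δ) (c : Γ), c ≠ x δ → σ (update x δ c) = σ x := by
    intro x δ c hc
    funext δ'
    by_cases hδ'δ : δ' = δ
    · subst hδ'δ; exact hσs x δ' c hc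
    · have hδδ' : δ ≠ δ' := fun h => hδ'δ h.symm
      obtain ⟨a, ha⟩ := hex (x δ')
      have hay : a ≠ update x δ c δ' := by
        rw [Function.update_of_ne hδ'δ]; exact ha
      have hEzw : E (update x δ' a) (update (update x δ c) δ' a) δ := by
        constructor
        · rw [Function.update_of_ne hδδ', Function.update_of_ne hδδ',
            Function.update_self]
          exact Ne.symm hc
        · intro ζ hζ
          by_cases h2 : ζ = δ'
          · subst h2; rw [Function.update_self, Function.update_self]
          · rw [Function.update_of_ne h2, Function.update_of_ne h2,
              Function.update_of_ne hζ]
      have hDxw : Dset x (update (update x δ c) δ' a) = {δ, δ'} := by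
        ext ζ
        simp only [mem_Dset, Finset.mem_insert, Finset.mem_singleton]
        by_cases h1 : ζ = δ
        · subst h1
          rw [Function.update_of_ne hδδ', Function.update_self]
          simpa using hc.symm
        · by_cases h2 : ζ = δ'
          · subst h2
            rw [Function.update_self]
            simpa [h1] using Ne.symm ha
          · rw [Function.update_of_ne h2, Function.update_of_ne h1]
            simp [h1, h2]
      have Ey : E (f x) (f (update x δ c)) (σ x δ) := hσ x δ c hc
      have Ez : E (f x) (f (update x δ' a)) (σ x δ') := hσ x δ' a ha
      have Ew : E (f (update x δ c)) (f (update (update x δ c) δ' a))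
          (σ (update x δ c) δ') := hσ (update x δ c) δ' a hay
      obtain ⟨ε₂, Ezw⟩ := hnb _ _ δ hEzw
      have hpε : σ x δ' ≠ σ x δ := fun h => hδ'δ (hσi x h)
      have hεy : σ (update x δ c) δ = σ x δ := hσs x δ c hc
      have hp'ε : σ (update x δ c) δ' ≠ σ x δ := fun h =>
        hδ'δ (hσi (update x δ c) (h.trans hεy.symm))
      have hc2 : (Dset (f x) (f (update (update x δ c) δ' a))).card = 2 := by
        rw [hd, hDxw, Finset.card_pair hδδ']
      have hsub1 : Dset (f x) (f (update (update x δ c) δ' a)) ⊆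
          {σ x δ, σ (update x δ c) δ'} := by
        intro ζ hζ
        simp only [Finset.mem_insert, Finset.mem_singleton]
        by_contra hζ'
        push_neg at hζ'
        exact (mem_Dset.1 hζ) ((Ey.2 ζ hζ'.1).trans (Ew.2 ζ hζ'.2))
      have hsub2 : Dset (f x) (f (update (update x δ c) δ' a)) ⊆ {σ x δ', ε₂} := by
        intro ζ hζ
        simp only [Finset.mem_insert, Finset.mem_singleton]
        by_contra hζ'
        push_neg at hζ'
        exact (mem_Dset.1 hζ) ((Ez.2 ζ hζ'.1).trans (Ezw.2 ζ hζ'.2))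
      have heq1 : Dset (f x) (f (update (update x δ c) δ' a)) =
          {σ x δ, σ (update x δ c) δ'} := by
        apply Finset.eq_of_subset_of_card_le hsub1
        rw [hc2, Finset.card_pair (Ne.symm hp'ε)]
      have hmem1 : σ x δ ∈ ({σ x δ', ε₂} : Finset Δ) :=
        hsub2 (heq1 ▸ Finset.mem_insert_self _ _)
      have hmem2 : σ (update x δ c) δ' ∈ ({σ x δ', ε₂} : Finset Δ) :=
        hsub2 (heq1 ▸ Finset.mem_insert_of_mem (Finset.mem_singleton_self _))
      simp only [Finset.mem_insert, Finset.mem_singleton] at hmem1 hmem2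
      have hε₂ : ε₂ = σ x δ := by
        rcases hmem1 with h | h
        · exact absurd h.symm hpε
        · exact h.symm
      rcases hmem2 with h | h
      · exact h
      · exact absurd (h.trans hε₂) hp'ε
  -- a base point
  obtain ⟨x₀⟩ : Nonempty (Δ → Γ) := ⟨fun _ => Classical.arbitrary Γ⟩
  -- σ is globally constant
  have hσc : ∀ x : Δ → Γ, σ x = σ x₀ := by
    have main : ∀ (n : ℕ) (x : Δ → Γ), (Dset x₀ x).card = n → σ x = σ x₀ := by
      intro n
      induction n using Nat.strong_induction_on with
      | _ n ih =>
        intro x hx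
        rcases Nat.eq_zero_or_pos n with h0 | hpos
        · subst h0
          rw [Dset_empty_iff.1 (Finset.card_eq_zero.1 hx)]
        · have hne : (Dset x₀ x).Nonempty := Finset.card_pos.1 (hx ▸ hpos)
          obtain ⟨δ₁, hδ₁⟩ := hne
          have hda : x₀ δ₁ ≠ x δ₁ := mem_Dset.1 hδ₁
          set x₁ := update x δ₁ (x₀ δ₁) with hx₁
          have hD1 : Dset x₀ x₁ = (Dset x₀ x).erase δ₁ := by
            ext ζ
            simp only [mem_Dset, Finset.mem_erase]
            by_cases h1 : ζ = δ₁
            · subst h1; rw [hx₁, Function.update_self]; simp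
            · rw [hx₁, Function.update_of_ne h1]; simp [h1, mem_Dset]
          have hcard1 : (Dset x₀ x₁).card = n - 1 := by
            rw [hD1, Finset.card_erase_of_mem hδ₁, hx]
          have hσ1 : σ x₁ = σ x₀ := ih (n - 1) (by omega) x₁ hcard1
          have hxx : update x₁ δ₁ (x δ₁) = x := by
            rw [hx₁, Function.update_idem, Function.update_eq_self]
          have hne1 : x δ₁ ≠ x₁ δ₁ := by
            rw [hx₁, Function.update_self]; exact Ne.symm hda
          calc σ x = σ (update x₁ δ₁ (x δ₁)) := by rw [hxx]
            _ = σ x₁ := hsq x₁ δ₁ (x δ₁) hne1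
            _ = σ x₀ := hσ1
    exact fun x => main (Dset x₀ x).card x rfl
  -- the coordinate permutation
  have hσbij : Function.Bijective (σ x₀) := Finite.injective_iff_bijective.1 (hσi x₀)
  set l : Equiv.Perm Δ := Equiv.ofBijective (σ x₀) hσbij with hl
  -- the coordinate maps
  set k₀ : Δ → Γ → Γ := fun δ c => f (update x₀ δ c) (σ x₀ δ) with hk₀
  have hk₀i : ∀ δ, Function.Injective (k₀ δ) := by
    intro δ c c' h
    by_contra hcc
    simp only [hk₀] at h
    by_cases h1 : c = x₀ δ
    · subst h1
      rw [Function.update_eq_self] at h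
      exact (hσ x₀ δ c' (Ne.symm hcc)).1 h
    · by_cases h2 : c' = x₀ δ
      · subst h2
        rw [Function.update_eq_self] at h
        exact (hσ x₀ δ c h1).1 h.symm
      · have hEyy' : E (update x₀ δ c) (update x₀ δ c') δ := by
          constructor
          · rw [Function.update_self, Function.update_self]; exact hcc
          · intro ζ hζ; rw [Function.update_of_ne hζ, Function.update_of_ne hζ]
        obtain ⟨ε₂, hE₂⟩ := hnb _ _ δ hEyy'
        rcases ne_or_eq ε₂ (σ x₀ δ) with hne2 | hne2
        · exact hE₂.1 (((hσ x₀ δ c h1).2 ε₂ hne2).symm.trans ((hσ x₀ δ c' h2).2 ε₂ hne2))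
        · rw [hne2] at hE₂
          exact hE₂.1 h
  have hk₀b : ∀ δ, Function.Bijective (k₀ δ) :=
    fun δ => Finite.injective_iff_bijective.1 (hk₀i δ)
  -- the main value claim
  have hM : ∀ (n : ℕ) (x : Δ → Γ), (Dset x₀ x).card = n →
      ∀ δ, f x (σ x₀ δ) = k₀ δ (x δ) := by
    intro n
    induction n using Nat.strong_induction_on with
    | _ n ih =>
      intro x hx δ
      rcases Nat.eq_zero_or_pos n with h0 | hpos
      · subst h0
        have hxe : x₀ = x := Dset_empty_iff.1 (Finset.card_eq_zero.1 hx)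
        subst hxe
        show f x₀ (σ x₀ δ) = f (update x₀ δ (x₀ δ)) (σ x₀ δ)
        rw [Function.update_eq_self]
      · by_cases hone : Dset x₀ x = {δ}
        · have hx' : update x₀ δ (x δ) = x := by
            funext ζ
            by_cases h1 : ζ = δ
            · subst h1; rw [Function.update_self]
            · rw [Function.update_of_ne h1]
              by_contra hzz
              have : ζ ∈ Dset x₀ x := mem_Dset.2 hzz
              rw [hone, Finset.mem_singleton] at this
              exact h1 this
          show f x (σ x₀ δ) = f (update x₀ δ (x δ)) (σ x₀ δ)
          rw [hx']
        · have hδ₁ : ∃ δ₁ ∈ Dset x₀ x, δ₁ ≠ δ := by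
            by_contra hcon
            push_neg at hcon
            have hsub : Dset x₀ x ⊆ {δ} := fun ζ hζ =>
              Finset.mem_singleton.2 (hcon ζ hζ)
            rcases Finset.subset_singleton_iff.1 hsub with h | h
            · rw [h] at hx; simp at hx; omega
            · exact hone h
          obtain ⟨δ₁, hδ₁, hδδ₁⟩ := hδ₁
          have hda : x₀ δ₁ ≠ x δ₁ := mem_Dset.1 hδ₁
          set x₁ := update x δ₁ (x₀ δ₁) with hx₁
          have hD1 : Dset x₀ x₁ = (Dset x₀ x).erase δ₁ := by
            ext ζ
            simp only [mem_Dset, Finset.mem_erase]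
            by_cases h1 : ζ = δ₁
            · subst h1; rw [hx₁, Function.update_self]; simp
            · rw [hx₁, Function.update_of_ne h1]; simp [h1, mem_Dset]
          have hcard1 : (Dset x₀ x₁).card = n - 1 := by
            rw [hD1, Finset.card_erase_of_mem hδ₁, hx]
          have ih1 := ih (n - 1) (by omega) x₁ hcard1 δ
          have hxx : update x₁ δ₁ (x δ₁) = x := by
            rw [hx₁, Function.update_idem, Function.update_eq_self]
          have hne1 : x δ₁ ≠ x₁ δ₁ := by
            rw [hx₁, Function.update_self]; exact Ne.symm hda
          have hE1 : E (f x₁) (f x) (σ x₁ δ₁) := by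
            have := hσ x₁ δ₁ (x δ₁) hne1
            rwa [hxx] at this
          rw [hσc x₁] at hE1
          have hσne : σ x₀ δ ≠ σ x₀ δ₁ := fun h => hδδ₁ (hσi x₀ h).symm
          have : f x₁ (σ x₀ δ) = f x (σ x₀ δ) := hE1.2 (σ x₀ δ) hσne
          rw [← this, ih1, hx₁, Function.update_of_ne (Ne.symm hδδ₁)]
  -- assemble
  refine ⟨fun δ => Equiv.ofBijective (k₀ (l⁻¹ δ)) (hk₀b (l⁻¹ δ)), l, ?_⟩
  intro x δ
  have := hM (Dset x₀ x).card x rfl (l⁻¹ δ)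
  have hll : σ x₀ (l⁻¹ δ) = δ := by
    change l (l⁻¹ δ) = δ
    simp
  rw [hll] at this
  exact this

end WPA

/-- The wreath product `Sym(Γ) ↑ Sym(Δ)` in product action on `Γ^Δ` is
2-closed when `|Γ| ≥ 3`: here `W` is the subgroup of `Sym(Γ^Δ)` consisting of
the product-action permutations `x ↦ (δ ↦ k δ (x (l⁻¹ δ)))`. -/
theorem stmt14 {Γ Δ : Type*} [Fintype Γ] [Fintype Δ]
    (hΓ : 3 ≤ Fintype.card Γ)
    (W : Subgroup (Equiv.Perm (Δ → Γ)))
    (hW : ∀ f : Equiv.Perm (Δ → Γ), f ∈ W ↔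
      ∃ (k : Δ → Equiv.Perm Γ) (l : Equiv.Perm Δ),
        ∀ (x : Δ → Γ) (δ : Δ), f x δ = k δ (x (l⁻¹ δ))) :
    mClosure 2 W = W := by
  classical
  apply le_antisymm
  · apply sSup_le
    rintro H hH h hh
    have hpair : ∀ x y : Δ → Γ, ∃ g ∈ W, g x = h x ∧ g y = h y := by
      intro x y
      have hr : ∃ h' ∈ H, ∀ i, h' (![x, y] i) = ![h x, h y] i :=
        ⟨h, hh, by intro i; fin_cases i <;> rfl⟩
      obtain ⟨g, hg, hgi⟩ := (hH ![x, y] ![h x, h y]).mpr hr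
      exact ⟨g, hg, by simpa using hgi 0, by simpa using hgi 1⟩
    have hd : ∀ x y : Δ → Γ,
        (WPA.Dset (h x) (h y)).card = (WPA.Dset x y).card := by
      intro x y
      obtain ⟨g, hg, hgx, hgy⟩ := hpair x y
      obtain ⟨k, l, hkl⟩ := (hW g).1 hg
      rw [← hgx, ← hgy]
      have himg : WPA.Dset (g x) (g y) = (WPA.Dset x y).image l := by
        ext δ
        simp only [WPA.mem_Dset, Finset.mem_image, hkl]
        constructor
        · intro hδ
          refine ⟨l⁻¹ δ, ?_, by simp⟩
          intro heq
          exact hδ (by rw [heq])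
        · rintro ⟨ζ, hζ, rfl⟩
          simp only [Equiv.Perm.inv_def, Equiv.symm_apply_apply]
          intro heq
          exact hζ ((k (l ζ)).injective heq)
      rw [himg, Finset.card_image_of_injective _ l.injective]
    have hcard : 1 < Fintype.card Γ := by omega
    obtain ⟨k, l, hkl⟩ := WPA.key hcard (⇑h) hd
    exact (hW h).2 ⟨k, l, hkl⟩
  · exact le_sSup (fun α β => Iff.rfl)
end

section
/- Let K ≤ Sym(Γ) and L ≤ Sym(Δ) be such that the wreath product K ↑ L in product action on Γ^Δ is primitive (equivalently, K is primitive and nonregular, and L is transitive and nontrivial). Then (K ↑ L)^(3) ≤ K^(3) ↑ L^(3), where closures are taken of K on Γ, of L on Δ, and of K ↑ L on Γ^Δ. -/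
set_option linter.unusedSectionVars false
set_option maxHeartbeats 1000000

theorem Equiv.Perm.apply_inv_self {α : Type*} (f : Equiv.Perm α) (x : α) : f (f⁻¹ x) = x :=
  f.apply_symm_apply x

theorem Equiv.Perm.inv_apply_self {α : Type*} (f : Equiv.Perm α) (x : α) : f⁻¹ (f x) = x :=
  f.symm_apply_apply x

namespace Stmt15Aux

/-- Permutations agreeing with some element of `G` on every `m`-tuple. -/
def agreeSubgroup {Ω : Type*} (m : ℕ) (G : Subgroup (Equiv.Perm Ω)) :
    Subgroup (Equiv.Perm Ω) where
  carrier := {g | ∀ α : Fin m → Ω, ∃ g' ∈ G, ∀ i, g' (α i) = g (α i)}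
  one_mem' := fun _ => ⟨1, G.one_mem, fun _ => rfl⟩
  mul_mem' := by
    intro a b ha hb α
    obtain ⟨w2, hw2, h2⟩ := hb α
    obtain ⟨w1, hw1, h1⟩ := ha (fun i => b (α i))
    refine ⟨w1 * w2, G.mul_mem hw1 hw2, fun i => ?_⟩
    rw [Equiv.Perm.mul_apply, h2 i, Equiv.Perm.mul_apply]
    exact h1 i
  inv_mem' := by
    intro a ha α
    obtain ⟨w, hw, h⟩ := ha (fun i => a⁻¹ (α i))
    refine ⟨w⁻¹, G.inv_mem hw, fun i => ?_⟩
    have h2 : w (a⁻¹ (α i)) = α i := by rw [h i, Equiv.Perm.apply_inv_self]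
    conv_lhs => rw [← h2]
    rw [Equiv.Perm.inv_apply_self]

theorem mem_agree_of_mem {Ω : Type*} {m : ℕ} {G : Subgroup (Equiv.Perm Ω)}
    {g : Equiv.Perm Ω} (hg : g ∈ G) : g ∈ agreeSubgroup m G :=
  fun α => ⟨g, hg, fun _ => rfl⟩

theorem sameOrbits_agree {Ω : Type*} (m : ℕ) (G : Subgroup (Equiv.Perm Ω)) :
    SameOrbits m G (agreeSubgroup m G) := by
  intro α β
  constructor
  · rintro ⟨g, hg, h⟩
    exact ⟨g, mem_agree_of_mem hg, h⟩
  · rintro ⟨h, hh, hhα⟩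
    obtain ⟨g, hg, hgα⟩ := hh α
    exact ⟨g, hg, fun i => (hgα i).trans (hhα i)⟩

theorem mClosure_le_agree {Ω : Type*} (m : ℕ) (G : Subgroup (Equiv.Perm Ω)) :
    mClosure m G ≤ agreeSubgroup m G := by
  apply sSup_le
  rintro H hH g hg α
  exact (hH α (fun i => g (α i))).mpr ⟨g, hg, fun _ => rfl⟩

theorem agree_le_mClosure {Ω : Type*} (m : ℕ) (G : Subgroup (Equiv.Perm Ω)) :
    agreeSubgroup m G ≤ mClosure m G :=
  le_sSup (sameOrbits_agree m G)


open Equiv Function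

section Structure

variable {Γ Δ : Type*}

/-- `x` and `y` differ exactly at coordinate `δ`. -/
def Adj (x y : Δ → Γ) (δ : Δ) : Prop :=
  x δ ≠ y δ ∧ ∀ ε, ε ≠ δ → x ε = y ε

/-- `x` and `y` differ exactly at the two distinct coordinates `p`, `q`. -/
def D2 (x y : Δ → Γ) (p q : Δ) : Prop :=
  p ≠ q ∧ x p ≠ y p ∧ x q ≠ y q ∧ ∀ ε, ε ≠ p → ε ≠ q → x ε = y ε

theorem Adj.symm {x y : Δ → Γ} {δ : Δ} (h : Adj x y δ) : Adj y x δ :=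
  ⟨h.1.symm, fun ε hε => (h.2 ε hε).symm⟩

theorem adj_unique {x y : Δ → Γ} {δ δ' : Δ} (h : Adj x y δ) (h' : Adj x y δ') :
    δ = δ' := by
  by_contra hne
  exact h.1 (h'.2 δ hne)

theorem adj_triangle {x y z : Δ → Γ} {a b c : Δ}
    (hxy : Adj x y a) (hyz : Adj y z b) (hxz : Adj x z c) : a = b ∧ c = a := by
  have hab : a = b := by
    by_contra hne
    have h1 : x a ≠ z a := by
      rw [← hyz.2 a hne]; exact hxy.1
    have h2 : x b ≠ z b := by
      rw [hxy.2 b (Ne.symm hne)]; exact hyz.1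
    have ha : a = c := by by_contra hc; exact h1 (hxz.2 a hc)
    have hb : b = c := by by_contra hc; exact h2 (hxz.2 b hc)
    exact hne (ha.trans hb.symm)
  refine ⟨hab, ?_⟩
  by_contra hc
  exact hxz.1 ((hxy.2 c hc).trans (hyz.2 c (fun hcb => hc (hcb.trans hab.symm))))

variable (f : Equiv.Perm (Δ → Γ))

/-- `f` matches the difference pattern of every pair up to a coordinate permutation. -/
def PairOK : Prop :=
  ∀ x y : Δ → Γ, ∃ σ : Equiv.Perm Δ, ∀ δ, (f x (σ δ) ≠ f y (σ δ) ↔ x δ ≠ y δ)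

theorem map_adj (hP : PairOK f) {x y : Δ → Γ} {δ : Δ} (h : Adj x y δ) :
    ∃ ε, Adj (f x) (f y) ε := by
  obtain ⟨σ, hσ⟩ := hP x y
  refine ⟨σ δ, (hσ δ).mpr h.1, fun ε hε => ?_⟩
  have hδ' : σ.symm ε ≠ δ := fun hc => hε (by rw [← hc, σ.apply_symm_apply])
  have h2 := hσ (σ.symm ε)
  rw [σ.apply_symm_apply] at h2
  by_contra hne
  exact (h2.mp hne) (h.2 _ hδ')

theorem map_D2 (hP : PairOK f) {x y : Δ → Γ} {p q : Δ} (h : D2 x y p q) :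
    ∃ p' q', D2 (f x) (f y) p' q' := by
  obtain ⟨σ, hσ⟩ := hP x y
  refine ⟨σ p, σ q, σ.injective.ne h.1, (hσ p).mpr h.2.1, (hσ q).mpr h.2.2.1,
    fun ε h1 h2 => ?_⟩
  have hp : σ.symm ε ≠ p := fun hc => h1 (by rw [← hc, σ.apply_symm_apply])
  have hq : σ.symm ε ≠ q := fun hc => h2 (by rw [← hc, σ.apply_symm_apply])
  have h3 := hσ (σ.symm ε)
  rw [σ.apply_symm_apply] at h3
  by_contra hne
  exact (h3.mp hne) (h.2.2.2 _ hp hq)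

variable [DecidableEq Δ] [Nontrivial Γ]

theorem exists_dir (hP : PairOK f) (x : Δ → Γ) (δ : Δ) :
    ∃ ε, ∀ z, Adj x z δ → Adj (f x) (f z) ε := by
  obtain ⟨γ', hγ'⟩ := exists_ne (x δ)
  set z₀ := Function.update x δ γ' with hz₀def
  have hxz₀ : Adj x z₀ δ := by
    refine ⟨?_, fun ε hε => ?_⟩
    · rw [hz₀def, Function.update_self]; exact Ne.symm hγ'
    · rw [hz₀def, Function.update_of_ne hε]
  obtain ⟨ε, hε⟩ := map_adj f hP hxz₀
  refine ⟨ε, fun z hz => ?_⟩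
  obtain ⟨ε₁, hε₁⟩ := map_adj f hP hz
  by_cases hzz : z = z₀
  · rw [← hzz] at hε; exact hε
  · have hz0δ : z δ ≠ z₀ δ := by
      intro hc
      apply hzz
      funext ε'
      by_cases hε' : ε' = δ
      · rw [hε']; exact hc
      · rw [← hz.2 ε' hε', hxz₀.2 ε' hε']
    have hadj : Adj z z₀ δ := ⟨hz0δ, fun ε' hε' => by rw [← hz.2 ε' hε', hxz₀.2 ε' hε']⟩
    obtain ⟨ε₂, hε₂⟩ := map_adj f hP hadj
    obtain ⟨_, h2⟩ := adj_triangle hε₁ hε₂ hε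
    rw [h2]; exact hε₁

noncomputable def dirF (hP : PairOK f) (x : Δ → Γ) (δ : Δ) : Δ :=
  (exists_dir f hP x δ).choose

theorem dirF_spec (hP : PairOK f) (x : Δ → Γ) (δ : Δ) :
    ∀ z, Adj x z δ → Adj (f x) (f z) (dirF f hP x δ) :=
  (exists_dir f hP x δ).choose_spec

theorem dirF_injective (hP : PairOK f) (x : Δ → Γ) :
    Function.Injective (dirF f hP x) := by
  intro δ δ' h
  by_contra hne
  obtain ⟨γ1, hγ1⟩ := exists_ne (x δ)
  obtain ⟨γ2, hγ2⟩ := exists_ne (x δ')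
  set z := Function.update x δ γ1 with hzdef
  set z' := Function.update x δ' γ2 with hz'def
  have hxz : Adj x z δ := by
    refine ⟨?_, fun ε hε => ?_⟩
    · rw [hzdef, Function.update_self]; exact Ne.symm hγ1
    · rw [hzdef, Function.update_of_ne hε]
  have hxz' : Adj x z' δ' := by
    refine ⟨?_, fun ε hε => ?_⟩
    · rw [hz'def, Function.update_self]; exact Ne.symm hγ2
    · rw [hz'def, Function.update_of_ne hε]
  have hD : D2 z z' δ δ' := by
    refine ⟨hne, ?_, ?_, fun ε h1 h2 => ?_⟩
    · rw [hzdef, hz'def, Function.update_self, Function.update_of_ne hne]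
      exact hγ1
    · rw [hzdef, hz'def, Function.update_of_ne (Ne.symm hne), Function.update_self]
      exact Ne.symm hγ2
    · rw [hzdef, hz'def, Function.update_of_ne h1, Function.update_of_ne h2]
  obtain ⟨p, q, hpq⟩ := map_D2 f hP hD
  have hz1 : Adj (f x) (f z) (dirF f hP x δ) := dirF_spec f hP x δ z hxz
  have hz2 : Adj (f x) (f z') (dirF f hP x δ) := by
    rw [h]; exact dirF_spec f hP x δ' z' hxz'
  have hp : p = dirF f hP x δ := by
    by_contra hc
    exact hpq.2.1 (((hz1.2 p hc).symm).trans (hz2.2 p hc))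
  have hq : q = dirF f hP x δ := by
    by_contra hc
    exact hpq.2.2.1 (((hz1.2 q hc).symm).trans (hz2.2 q hc))
  exact hpq.1 (hp.trans hq.symm)

theorem dirF_adj_base (hP : PairOK f) {x y : Δ → Γ} {δ₀ : Δ} (h : Adj x y δ₀) :
    dirF f hP x δ₀ = dirF f hP y δ₀ :=
  adj_unique (dirF_spec f hP x δ₀ y h) ((dirF_spec f hP y δ₀ x h.symm).symm)

theorem dirF_adj (hP : PairOK f) {x y : Δ → Γ} {δ₀ : Δ} (h : Adj x y δ₀) :
    dirF f hP x = dirF f hP y := by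
  funext δ
  by_cases hδ : δ = δ₀
  · rw [hδ]; exact dirF_adj_base f hP h
  · obtain ⟨γ', hγ'⟩ := exists_ne (x δ)
    set z := Function.update x δ γ' with hzdef
    set u := Function.update y δ γ' with hudef
    have hxyδ : x δ = y δ := h.2 δ hδ
    have hxz : Adj x z δ := by
      refine ⟨?_, fun ε hε => ?_⟩
      · rw [hzdef, Function.update_self]; exact Ne.symm hγ'
      · rw [hzdef, Function.update_of_ne hε]
    have hyu : Adj y u δ := by
      refine ⟨?_, fun ε hε => ?_⟩
      · intro hc
        rw [hudef, Function.update_self] at hc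
        exact hγ' (hc.symm.trans hxyδ.symm)
      · rw [hudef, Function.update_of_ne hε]
    have hzu : Adj z u δ₀ := by
      refine ⟨?_, fun ε hε => ?_⟩
      · rw [hzdef, hudef, Function.update_of_ne (fun hc => hδ hc.symm),
          Function.update_of_ne (fun hc => hδ hc.symm)]
        exact h.1
      · by_cases hεδ : ε = δ
        · rw [hzdef, hudef, hεδ, Function.update_self, Function.update_self]
        · rw [hzdef, hudef, Function.update_of_ne hεδ, Function.update_of_ne hεδ]
          exact h.2 ε hε
    have hxu : D2 x u δ δ₀ := by
      refine ⟨hδ, ?_, ?_, fun ε h1 h2 => ?_⟩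
      · rw [hudef, Function.update_self]; exact Ne.symm hγ'
      · rw [hudef, Function.update_of_ne (fun hc => hδ hc.symm)]; exact h.1
      · rw [hudef, Function.update_of_ne h1]; exact h.2 ε h2
    have hfa : Adj (f x) (f z) (dirF f hP x δ) := dirF_spec f hP x δ z hxz
    have hfb : Adj (f x) (f y) (dirF f hP x δ₀) := dirF_spec f hP x δ₀ y h
    have hfa' : Adj (f y) (f u) (dirF f hP y δ) := dirF_spec f hP y δ u hyu
    obtain ⟨d, hfd⟩ := map_adj f hP hzu
    have hab : dirF f hP x δ ≠ dirF f hP x δ₀ := fun hc => hδ (dirF_injective f hP x hc)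
    obtain ⟨p, q, hpq⟩ := map_D2 f hP hxu
    have mem1 : ∀ r, f x r ≠ f u r → r = dirF f hP x δ ∨ r = d := by
      intro r hr
      by_contra hc
      push_neg at hc
      exact hr ((hfa.2 r hc.1).trans (hfd.2 r hc.2))
    have mem2 : ∀ r, f x r ≠ f u r → r = dirF f hP x δ₀ ∨ r = dirF f hP y δ := by
      intro r hr
      by_contra hc
      push_neg at hc
      exact hr ((hfb.2 r hc.1).trans (hfa'.2 r hc.2))
    have hamem : dirF f hP x δ = p ∨ dirF f hP x δ = q := by
      rcases mem1 p hpq.2.1 with hp | hp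
      · exact Or.inl hp.symm
      · rcases mem1 q hpq.2.2.1 with hq | hq
        · exact Or.inr hq.symm
        · exact absurd (hp.trans hq.symm) hpq.1
    rcases hamem with h1 | h1
    · rcases mem2 p hpq.2.1 with h2 | h2
      · exact absurd (h1.trans h2) hab
      · exact h1.trans h2
    · rcases mem2 q hpq.2.2.1 with h2 | h2
      · exact absurd (h1.trans h2) hab
      · exact h1.trans h2

variable [Fintype Δ]

theorem dirF_const (hP : PairOK f) (x y : Δ → Γ) :
    dirF f hP x = dirF f hP y := by
  classical
  have key : ∀ n (y : Δ → Γ), (Finset.univ.filter fun δ => x δ ≠ y δ).card ≤ n →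
      dirF f hP x = dirF f hP y := by
    intro n
    induction n with
    | zero =>
      intro y hcard
      have hxy : x = y := by
        funext δ
        by_contra hne
        have hmem : δ ∈ Finset.univ.filter (fun δ => x δ ≠ y δ) := by
          simp [hne]
        have := Finset.card_pos.mpr ⟨δ, hmem⟩
        omega
      rw [hxy]
    | succ n ih =>
      intro y hcard
      by_cases hxy : x = y
      · rw [hxy]
      · have hex : ∃ δ, x δ ≠ y δ := by
          by_contra hc
          push_neg at hc
          exact hxy (funext hc)
        obtain ⟨δ, hδ⟩ := hex
        set y' := Function.update y δ (x δ) with hy'def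
        have hadj : Adj y' y δ := by
          refine ⟨?_, fun ε hε => ?_⟩
          · rw [hy'def, Function.update_self]; exact hδ
          · rw [hy'def, Function.update_of_ne hε]
        have hsub : (Finset.univ.filter fun ε => x ε ≠ y' ε) ⊆
            (Finset.univ.filter fun ε => x ε ≠ y ε).erase δ := by
          intro ε hε
          rw [Finset.mem_filter] at hε
          rw [Finset.mem_erase, Finset.mem_filter]
          have hεδ : ε ≠ δ := by
            intro hc
            apply hε.2
            rw [hc, hy'def, Function.update_self]
          refine ⟨hεδ, Finset.mem_univ _, ?_⟩
          have h4 := hε.2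
          rwa [hy'def, Function.update_of_ne hεδ] at h4
        have hmemδ : δ ∈ Finset.univ.filter (fun ε => x ε ≠ y ε) := by simp [hδ]
        have hcard' : (Finset.univ.filter fun ε => x ε ≠ y' ε).card ≤ n := by
          have h1 := Finset.card_le_card hsub
          have h2 := Finset.card_erase_of_mem hmemδ
          have h3 := Finset.card_pos.mpr ⟨δ, hmemδ⟩
          omega
        exact (ih y' hcard').trans (dirF_adj f hP hadj)
  exact key _ y le_rfl

variable [Nonempty (Δ → Γ)]

noncomputable def lPerm (hP : PairOK f) : Equiv.Perm Δ :=
  Equiv.ofBijective (dirF f hP (Classical.arbitrary (Δ → Γ)))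
    (Finite.injective_iff_bijective.mp (dirF_injective f hP _))

theorem lPerm_adj (hP : PairOK f) {x z : Δ → Γ} {δ : Δ} (h : Adj x z δ) :
    Adj (f x) (f z) (lPerm f hP δ) := by
  have he : lPerm f hP δ = dirF f hP x δ := congrFun (dirF_const f hP _ x) δ
  rw [he]
  exact dirF_spec f hP x δ z h

theorem f_agree_at (hP : PairOK f) {x y : Δ → Γ} {δ : Δ} (hxy : x δ = y δ) :
    f x (lPerm f hP δ) = f y (lPerm f hP δ) := by
  classical
  have key : ∀ n (y : Δ → Γ), x δ = y δ →
      (Finset.univ.filter fun ε => x ε ≠ y ε).card ≤ n →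
      f x (lPerm f hP δ) = f y (lPerm f hP δ) := by
    intro n
    induction n with
    | zero =>
      intro y hxyδ hcard
      have hxy : x = y := by
        funext ε
        by_contra hne
        have hmem : ε ∈ Finset.univ.filter (fun ε => x ε ≠ y ε) := by simp [hne]
        have := Finset.card_pos.mpr ⟨ε, hmem⟩
        omega
      rw [hxy]
    | succ n ih =>
      intro y hxyδ hcard
      by_cases hxy : x = y
      · rw [hxy]
      · have hex : ∃ ε, x ε ≠ y ε := by
          by_contra hc
          push_neg at hc
          exact hxy (funext hc)
        obtain ⟨δ₁, hδ₁⟩ := hex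
        have hδδ₁ : δ ≠ δ₁ := by
          intro hc
          rw [← hc] at hδ₁
          exact hδ₁ hxyδ
        set y' := Function.update y δ₁ (x δ₁) with hy'def
        have hadj : Adj y' y δ₁ := by
          refine ⟨?_, fun ε hε => ?_⟩
          · rw [hy'def, Function.update_self]; exact hδ₁
          · rw [hy'def, Function.update_of_ne hε]
        have hstep : f y' (lPerm f hP δ) = f y (lPerm f hP δ) :=
          (lPerm_adj f hP hadj).2 _ ((lPerm f hP).injective.ne hδδ₁)
        have hxy'δ : x δ = y' δ := by
          rw [hy'def, Function.update_of_ne hδδ₁]; exact hxyδ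
        have hsub : (Finset.univ.filter fun ε => x ε ≠ y' ε) ⊆
            (Finset.univ.filter fun ε => x ε ≠ y ε).erase δ₁ := by
          intro ε hε
          rw [Finset.mem_filter] at hε
          rw [Finset.mem_erase, Finset.mem_filter]
          have hεδ : ε ≠ δ₁ := by
            intro hc
            apply hε.2
            rw [hc, hy'def, Function.update_self]
          refine ⟨hεδ, Finset.mem_univ _, ?_⟩
          have h4 := hε.2
          rwa [hy'def, Function.update_of_ne hεδ] at h4
        have hmemδ : δ₁ ∈ Finset.univ.filter (fun ε => x ε ≠ y ε) := by simp [hδ₁]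
        have hcard' : (Finset.univ.filter fun ε => x ε ≠ y' ε).card ≤ n := by
          have h1 := Finset.card_le_card hsub
          have h2 := Finset.card_erase_of_mem hmemδ
          have h3 := Finset.card_pos.mpr ⟨δ₁, hmemδ⟩
          omega
        exact (ih y' hxy'δ hcard').trans hstep
  exact key _ y hxy le_rfl

/-- The coordinate components of `f`. -/
def kF (ε : Δ) (γ : Γ) : Γ := f (fun _ => γ) ε

theorem f_decomp (hP : PairOK f) (x : Δ → Γ) (ε : Δ) :
    f x ε = kF f ε (x ((lPerm f hP)⁻¹ ε)) := by
  obtain ⟨δ, rfl⟩ : ∃ δ, lPerm f hP δ = ε :=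
    ⟨(lPerm f hP)⁻¹ ε, Equiv.Perm.apply_inv_self (lPerm f hP) ε⟩
  show f x (lPerm f hP δ) =
    f (fun _ => x ((lPerm f hP)⁻¹ (lPerm f hP δ))) (lPerm f hP δ)
  rw [Equiv.Perm.inv_apply_self (lPerm f hP)]
  exact f_agree_at f hP rfl

theorem kF_injective (hP : PairOK f) (ε : Δ) :
    Function.Injective (kF f ε) := by
  intro γ γ' hk
  by_contra hne
  obtain ⟨σ, hσ⟩ := hP (fun _ => γ) (fun _ => γ')
  have h2 := hσ (σ.symm ε)
  rw [σ.apply_symm_apply] at h2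
  exact (h2.mpr hne) hk

variable [Fintype Γ]

noncomputable def kPerm (hP : PairOK f) (ε : Δ) : Equiv.Perm Γ :=
  Equiv.ofBijective (kF f ε) (Finite.injective_iff_bijective.mp (kF_injective f hP ε))

theorem kPerm_apply (hP : PairOK f) (ε : Δ) (γ : Γ) :
    kPerm f hP ε γ = kF f ε γ := rfl

theorem w_adj {w : Equiv.Perm (Δ → Γ)} {kw : Δ → Equiv.Perm Γ} {lw : Equiv.Perm Δ}
    (hw : ∀ x δ, w x δ = kw δ (x (lw⁻¹ δ))) {x y : Δ → Γ} {δ : Δ}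
    (hxy : Adj x y δ) : Adj (w x) (w y) (lw δ) := by
  constructor
  · rw [hw, hw, Equiv.Perm.inv_apply_self]
    exact (kw (lw δ)).injective.ne hxy.1
  · intro ε hε
    rw [hw, hw]
    congr 1
    exact hxy.2 _ (fun hc => hε (by rw [← hc, Equiv.Perm.apply_inv_self]))

theorem w_D2 {w : Equiv.Perm (Δ → Γ)} {kw : Δ → Equiv.Perm Γ} {lw : Equiv.Perm Δ}
    (hw : ∀ x δ, w x δ = kw δ (x (lw⁻¹ δ))) {x y : Δ → Γ} {p q : Δ}
    (hxy : D2 x y p q) : D2 (w x) (w y) (lw p) (lw q) := by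
  refine ⟨lw.injective.ne hxy.1, ?_, ?_, ?_⟩
  · rw [hw, hw, Equiv.Perm.inv_apply_self]
    exact (kw _).injective.ne hxy.2.1
  · rw [hw, hw, Equiv.Perm.inv_apply_self]
    exact (kw _).injective.ne hxy.2.2.1
  · intro ε h1 h2
    rw [hw, hw]
    congr 1
    refine hxy.2.2.2 _ (fun hc => h1 ?_) (fun hc => h2 ?_)
    · rw [← hc, Equiv.Perm.apply_inv_self]
    · rw [← hc, Equiv.Perm.apply_inv_self]

theorem pin_adj (hP : PairOK f) {w : Equiv.Perm (Δ → Γ)} {kw : Δ → Equiv.Perm Γ}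
    {lw : Equiv.Perm Δ} (hw : ∀ x δ, w x δ = kw δ (x (lw⁻¹ δ)))
    {x y : Δ → Γ} {δ : Δ} (hfx : w x = f x) (hfy : w y = f y) (hxy : Adj x y δ) :
    lw δ = lPerm f hP δ := by
  have h1 := w_adj hw hxy
  rw [hfx, hfy] at h1
  exact adj_unique h1 (lPerm_adj f hP hxy)

theorem f_D2 (hP : PairOK f) {x y : Δ → Γ} {p q : Δ} (hxy : D2 x y p q) :
    D2 (f x) (f y) (lPerm f hP p) (lPerm f hP q) := by
  have hinv : ∀ r, (lPerm f hP)⁻¹ (lPerm f hP r) = r := fun r =>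
    Equiv.Perm.inv_apply_self (lPerm f hP) r
  refine ⟨(lPerm f hP).injective.ne hxy.1, ?_, ?_, ?_⟩
  · rw [f_decomp f hP x, f_decomp f hP y, hinv]
    exact (kF_injective f hP _).ne hxy.2.1
  · rw [f_decomp f hP x, f_decomp f hP y, hinv]
    exact (kF_injective f hP _).ne hxy.2.2.1
  · intro ε h1 h2
    rw [f_decomp f hP x, f_decomp f hP y]
    congr 1
    refine hxy.2.2.2 _ (fun hc => h1 ?_) (fun hc => h2 ?_)
    · rw [← hc, Equiv.Perm.apply_inv_self]
    · rw [← hc, Equiv.Perm.apply_inv_self]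

theorem pin_D2 (hP : PairOK f) {w : Equiv.Perm (Δ → Γ)} {kw : Δ → Equiv.Perm Γ}
    {lw : Equiv.Perm Δ} (hw : ∀ x δ, w x δ = kw δ (x (lw⁻¹ δ)))
    {x y : Δ → Γ} {p q : Δ} (hfx : w x = f x) (hfy : w y = f y)
    (hxy : D2 x y p q) :
    (lw p = lPerm f hP p ∧ lw q = lPerm f hP q) ∨
      (lw p = lPerm f hP q ∧ lw q = lPerm f hP p) := by
  have h1 := w_D2 hw hxy
  rw [hfx, hfy] at h1
  have h2 := f_D2 f hP hxy
  have mem : ∀ r, f x r ≠ f y r → r = lPerm f hP p ∨ r = lPerm f hP q := by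
    intro r hr
    by_contra hc
    push_neg at hc
    exact hr (h2.2.2.2 r hc.1 hc.2)
  rcases mem _ h1.2.1 with hp | hp
  · rcases mem _ h1.2.2.1 with hq | hq
    · exact absurd (hp.trans hq.symm) h1.1
    · exact Or.inl ⟨hp, hq⟩
  · rcases mem _ h1.2.2.1 with hq | hq
    · exact Or.inr ⟨hp, hq⟩
    · exact absurd (hp.trans hq.symm) h1.1

end Structure


theorem mem_agree_iff {Ω : Type*} {m : ℕ} {G : Subgroup (Equiv.Perm Ω)}
    {g : Equiv.Perm Ω} :
    g ∈ agreeSubgroup m G ↔ ∀ α : Fin m → Ω, ∃ g' ∈ G, ∀ i, g' (α i) = g (α i) :=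
  Iff.rfl

end Stmt15Aux


/-- If the wreath product `K ↑ L` in product action on `Γ^Δ` is primitive
(equivalently, `K` is primitive and nonregular and `L` is transitive and
nontrivial), then `(K ↑ L)^(3) ≤ K^(3) ↑ L^(3)`. Here `W` is `K ↑ L` and
`W'` is `K^(3) ↑ L^(3)`, both in product action on `Γ^Δ`. -/
theorem stmt15 {Γ Δ : Type*} [Fintype Γ] [Fintype Δ]
    (K : Subgroup (Equiv.Perm Γ)) (L : Subgroup (Equiv.Perm Δ))
    -- `K` is primitive:
    (hKtrans : ∀ x y : Γ, ∃ g ∈ K, g x = y)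
    (hKprim : ∀ B : Set Γ, (∀ g ∈ K, g '' B = B ∨ Disjoint (g '' B) B) →
      B.Subsingleton ∨ B = Set.univ)
    -- `K` is nonregular:
    (hKnonreg : ∃ g ∈ K, g ≠ 1 ∧ ∃ γ : Γ, g γ = γ)
    -- `L` is transitive and nontrivial:
    (hLtrans : ∀ x y : Δ, ∃ l ∈ L, l x = y)
    (hLnontriv : L ≠ ⊥)
    (W W' : Subgroup (Equiv.Perm (Δ → Γ)))
    (hW : ∀ f : Equiv.Perm (Δ → Γ), f ∈ W ↔
      ∃ (k : Δ → Equiv.Perm Γ) (l : Equiv.Perm Δ),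
        (∀ δ, k δ ∈ K) ∧ l ∈ L ∧
          ∀ (x : Δ → Γ) (δ : Δ), f x δ = k δ (x (l⁻¹ δ)))
    (hW' : ∀ f : Equiv.Perm (Δ → Γ), f ∈ W' ↔
      ∃ (k : Δ → Equiv.Perm Γ) (l : Equiv.Perm Δ),
        (∀ δ, k δ ∈ mClosure 3 K) ∧ l ∈ mClosure 3 L ∧
          ∀ (x : Δ → Γ) (δ : Δ), f x δ = k δ (x (l⁻¹ δ))) :
    mClosure 3 W ≤ W' := by
  classical
  open Stmt15Aux in
  -- `Γ` is nontrivial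
  obtain ⟨g, hgK, hg1, -, -⟩ := hKnonreg
  have hgne : ∃ γ : Γ, g γ ≠ γ := by
    by_contra hc
    push_neg at hc
    exact hg1 (Equiv.ext fun γ => (hc γ).trans rfl)
  obtain ⟨γw, hγw⟩ := hgne
  haveI hΓ : Nontrivial Γ := ⟨⟨g γw, γw, hγw⟩⟩
  -- `Δ` is nonempty
  haveI hΔne : Nonempty Δ := by
    by_contra hc
    rw [not_nonempty_iff] at hc
    apply hLnontriv
    ext σ
    simp only [Subgroup.mem_bot]
    constructor
    · intro _
      exact Equiv.ext fun δ => (hc.elim δ)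
    · rintro rfl
      exact L.one_mem
  intro f hf
  have hf3 : ∀ α : Fin 3 → (Δ → Γ), ∃ w ∈ W, ∀ i, w (α i) = f (α i) :=
    fun α => Stmt15Aux.mClosure_le_agree 3 W hf α
  -- pair structure
  have hP : Stmt15Aux.PairOK f := by
    intro x y
    obtain ⟨w, hwW, hw⟩ := hf3 ![x, y, y]
    obtain ⟨kw, lw, hkwK, hlwL, hweq⟩ := (hW w).mp hwW
    have hwx : w x = f x := by simpa using hw 0
    have hwy : w y = f y := by simpa using hw 1
    refine ⟨lw, fun δ => ?_⟩
    rw [← hwx, ← hwy, hweq x, hweq y, Equiv.Perm.inv_apply_self]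
    exact (kw (lw δ)).injective.ne_iff
  -- extract a witness on any triple of points
  have getw : ∀ x y z : Δ → Γ, ∃ (kw : Δ → Equiv.Perm Γ) (lw : Equiv.Perm Δ)
      (w : Equiv.Perm (Δ → Γ)),
      (∀ δ, kw δ ∈ K) ∧ lw ∈ L ∧ (∀ v δ, w v δ = kw δ (v (lw⁻¹ δ))) ∧
      w x = f x ∧ w y = f y ∧ w z = f z := by
    intro x y z
    obtain ⟨w, hwW, hw⟩ := hf3 ![x, y, z]
    obtain ⟨kw, lw, hkwK, hlwL, hweq⟩ := (hW w).mp hwW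
    exact ⟨kw, lw, w, hkwK, hlwL, hweq, by simpa using hw 0, by simpa using hw 1,
      by simpa using hw 2⟩
  obtain ⟨γ, γ', hγγ'⟩ := exists_pair_ne Γ
  set x0 : Δ → Γ := fun _ => γ with hx0def
  have hAdjupd : ∀ (δa : Δ), Adj x0 (Function.update x0 δa γ') δa := by
    intro δa
    refine ⟨?_, fun ε hε => ?_⟩
    · rw [Function.update_self]
      exact hγγ'
    · rw [Function.update_of_ne hε]
  -- pinning `lPerm` on single coordinates
  have H1 : ∀ δa : Δ, ∃ h ∈ L, h δa = Stmt15Aux.lPerm f hP δa := by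
    intro δa
    obtain ⟨kw, lw, w, hkwK, hlwL, hweq, hw1, hw2, -⟩ :=
      getw x0 (Function.update x0 δa γ') (Function.update x0 δa γ')
    exact ⟨lw, hlwL, Stmt15Aux.pin_adj f hP hweq hw1 hw2 (hAdjupd δa)⟩
  -- pinning `lPerm` on two coordinates
  have H2 : ∀ δa δb : Δ, δa ≠ δb → ∃ h ∈ L,
      h δa = Stmt15Aux.lPerm f hP δa ∧ h δb = Stmt15Aux.lPerm f hP δb := by
    intro δa δb hab
    set y := Function.update x0 δa γ' with hydef
    set z := Function.update y δb γ' with hzdef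
    have hyz : Adj y z δb := by
      refine ⟨?_, fun ε hε => ?_⟩
      · rw [hzdef, Function.update_self, hydef, Function.update_of_ne (Ne.symm hab)]
        exact hγγ'
      · rw [hzdef, Function.update_of_ne hε]
    obtain ⟨kw, lw, w, hkwK, hlwL, hweq, hw1, hw2, hw3⟩ := getw x0 y z
    exact ⟨lw, hlwL, Stmt15Aux.pin_adj f hP hweq hw1 hw2 (hAdjupd δa),
      Stmt15Aux.pin_adj f hP hweq hw2 hw3 hyz⟩
  -- pinning `lPerm` on three pairwise distinct coordinates
  have H3 : ∀ δ1 δ2 δ3 : Δ, δ1 ≠ δ2 → δ1 ≠ δ3 → δ2 ≠ δ3 → ∃ h ∈ L,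
      h δ1 = Stmt15Aux.lPerm f hP δ1 ∧ h δ2 = Stmt15Aux.lPerm f hP δ2 ∧
      h δ3 = Stmt15Aux.lPerm f hP δ3 := by
    intro δ1 δ2 δ3 h12 h13 h23
    have hD : ∀ (a b : Δ), a ≠ b →
        D2 (Function.update x0 a γ') (Function.update x0 b γ') a b := by
      intro a b hab
      refine ⟨hab, ?_, ?_, fun ε e1 e2 => ?_⟩
      · rw [Function.update_self, Function.update_of_ne hab]
        exact Ne.symm hγγ'
      · rw [Function.update_of_ne (Ne.symm hab), Function.update_self]
        exact hγγ'
      · rw [Function.update_of_ne e1, Function.update_of_ne e2]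
    obtain ⟨kw, lw, w, hkwK, hlwL, hweq, hw1, hw2, hw3⟩ :=
      getw (Function.update x0 δ1 γ') (Function.update x0 δ2 γ')
        (Function.update x0 δ3 γ')
    have s12 := Stmt15Aux.pin_D2 f hP hweq hw1 hw2 (hD δ1 δ2 h12)
    have s13 := Stmt15Aux.pin_D2 f hP hweq hw1 hw3 (hD δ1 δ3 h13)
    have lne : ∀ a b : Δ, a ≠ b → Stmt15Aux.lPerm f hP a ≠ Stmt15Aux.lPerm f hP b :=
      fun a b hab => (Stmt15Aux.lPerm f hP).injective.ne hab
    rcases s12 with ⟨e1, e2⟩ | ⟨e1, e2⟩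
    · rcases s13 with ⟨e1', e3⟩ | ⟨e1', e3⟩
      · exact ⟨lw, hlwL, e1, e2, e3⟩
      · exact absurd (e1.symm.trans e1') (lne _ _ h13)
    · rcases s13 with ⟨e1', e3⟩ | ⟨e1', e3⟩
      · exact absurd (e1.symm.trans e1').symm (lne _ _ h12)
      · exact absurd (e1.symm.trans e1') (lne _ _ h23)
  rw [hW' f]
  refine ⟨fun ε => Stmt15Aux.kPerm f hP ε, Stmt15Aux.lPerm f hP, ?_, ?_, ?_⟩
  · -- each coordinate component lies in the 3-closure of K
    intro ε
    refine Stmt15Aux.agree_le_mClosure 3 K ?_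
    rw [Stmt15Aux.mem_agree_iff]
    intro α
    obtain ⟨δ, hlδ⟩ : ∃ δ, Stmt15Aux.lPerm f hP δ = ε :=
      ⟨(Stmt15Aux.lPerm f hP)⁻¹ ε, Equiv.Perm.apply_inv_self (Stmt15Aux.lPerm f hP) ε⟩
    have hinvδ : (Stmt15Aux.lPerm f hP)⁻¹ ε = δ := by
      rw [← hlδ, Equiv.Perm.inv_apply_self]
    by_cases hall : α 1 = α 0 ∧ α 2 = α 0
    · obtain ⟨γ'', hγ''⟩ := exists_ne (α 0)
      have hpq : Adj (fun _ => α 0) (Function.update (fun _ => α 0) δ γ'') δ := by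
        refine ⟨?_, fun ε' hε' => ?_⟩
        · rw [Function.update_self]
          exact Ne.symm hγ''
        · rw [Function.update_of_ne hε']
      obtain ⟨kw, lw, w, hkwK, hlwL, hweq, hwp, hwq, -⟩ :=
        getw (fun _ => α 0) (Function.update (fun _ => α 0) δ γ'')
          (Function.update (fun _ => α 0) δ γ'')
      have hpin : lw δ = ε := by
        rw [Stmt15Aux.pin_adj f hP hweq hwp hwq hpq, hlδ]
      have hlwinv : lw⁻¹ ε = δ := by rw [← hpin, Equiv.Perm.inv_apply_self]
      refine ⟨kw ε, hkwK ε, ?_⟩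
      have hkey : kw ε (α 0) = Stmt15Aux.kPerm f hP ε (α 0) := by
        have h1 : w (fun _ => α 0) ε = f (fun _ => α 0) ε := congrFun hwp ε
        calc kw ε (α 0) = w (fun _ => α 0) ε := by
              simp only [hweq, hlwinv]
          _ = f (fun _ => α 0) ε := h1
          _ = Stmt15Aux.kPerm f hP ε (α 0) := by
              rw [Stmt15Aux.f_decomp f hP (fun _ => α 0) ε]
              exact (Stmt15Aux.kPerm_apply f hP ε (α 0)).symm
      have he0 : kw ε (α 0) = Stmt15Aux.kPerm f hP ε (α 0) := hkey
      have he1 : kw ε (α 1) = Stmt15Aux.kPerm f hP ε (α 1) := by rw [hall.1]; exact hkey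
      have he2 : kw ε (α 2) = Stmt15Aux.kPerm f hP ε (α 2) := by rw [hall.2]; exact hkey
      intro i
      fin_cases i
      exacts [he0, he1, he2]
    · obtain ⟨kw, lw, w, hkwK, hlwL, hweq, hwp0, hwp1, hwp2⟩ :=
        getw (Function.update (fun _ => γ) δ (α 0))
          (Function.update (fun _ => γ) δ (α 1))
          (Function.update (fun _ => γ) δ (α 2))
      have hAdj : ∀ i j : Fin 3, α i ≠ α j →
          Adj (Function.update (fun _ => γ) δ (α i))
            (Function.update (fun _ => γ) δ (α j)) δ := by
        intro i j hne
        refine ⟨?_, fun ε' hε' => ?_⟩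
        · rw [Function.update_self, Function.update_self]
          exact hne
        · rw [Function.update_of_ne hε', Function.update_of_ne hε']
      have hpin : lw δ = ε := by
        rw [not_and_or] at hall
        rcases hall with h1 | h2
        · rw [Stmt15Aux.pin_adj f hP hweq hwp1 hwp0 (hAdj 1 0 h1), hlδ]
        · rw [Stmt15Aux.pin_adj f hP hweq hwp2 hwp0 (hAdj 2 0 h2), hlδ]
      have hlwinv : lw⁻¹ ε = δ := by rw [← hpin, Equiv.Perm.inv_apply_self]
      refine ⟨kw ε, hkwK ε, ?_⟩
      have hkey : ∀ i : Fin 3, kw ε (α i) = Stmt15Aux.kPerm f hP ε (α i) := by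
        intro i
        have h1 : w (Function.update (fun _ => γ) δ (α i)) ε =
            f (Function.update (fun _ => γ) δ (α i)) ε := by
          fin_cases i
          exacts [congrFun hwp0 ε, congrFun hwp1 ε, congrFun hwp2 ε]
        calc kw ε (α i) = w (Function.update (fun _ => γ) δ (α i)) ε := by
              rw [hweq (Function.update (fun _ => γ) δ (α i)) ε, hlwinv,
                Function.update_self]
          _ = f (Function.update (fun _ => γ) δ (α i)) ε := h1
          _ = Stmt15Aux.kPerm f hP ε (α i) := by
              rw [Stmt15Aux.f_decomp f hP (Function.update (fun _ => γ) δ (α i)) ε,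
                hinvδ, Function.update_self]
              exact (Stmt15Aux.kPerm_apply f hP ε (α i)).symm
      exact hkey
  · -- the top component lies in the 3-closure of L
    refine Stmt15Aux.agree_le_mClosure 3 L ?_
    rw [Stmt15Aux.mem_agree_iff]
    intro α
    by_cases h01 : α 0 = α 1
    · by_cases h02 : α 0 = α 2
      · obtain ⟨h, hh, he⟩ := H1 (α 0)
        refine ⟨h, hh, ?_⟩
        have he1 : h (α 1) = Stmt15Aux.lPerm f hP (α 1) := by rw [← h01]; exact he
        have he2 : h (α 2) = Stmt15Aux.lPerm f hP (α 2) := by rw [← h02]; exact he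
        intro i
        fin_cases i
        exacts [he, he1, he2]
      · obtain ⟨h, hh, he1, he2⟩ := H2 (α 0) (α 2) h02
        refine ⟨h, hh, ?_⟩
        have he1' : h (α 1) = Stmt15Aux.lPerm f hP (α 1) := by rw [← h01]; exact he1
        intro i
        fin_cases i
        exacts [he1, he1', he2]
    · by_cases h02 : α 0 = α 2
      · obtain ⟨h, hh, he1, he2⟩ := H2 (α 0) (α 1) h01
        refine ⟨h, hh, ?_⟩
        have he2' : h (α 2) = Stmt15Aux.lPerm f hP (α 2) := by rw [← h02]; exact he1
        intro i
        fin_cases i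
        exacts [he1, he2, he2']
      · by_cases h12 : α 1 = α 2
        · obtain ⟨h, hh, he1, he2⟩ := H2 (α 0) (α 1) h01
          refine ⟨h, hh, ?_⟩
          have he2' : h (α 2) = Stmt15Aux.lPerm f hP (α 2) := by rw [← h12]; exact he2
          intro i
          fin_cases i
          exacts [he1, he2, he2']
        · obtain ⟨h, hh, he1, he2, he3⟩ := H3 (α 0) (α 1) (α 2) h01 h02 h12
          refine ⟨h, hh, ?_⟩
          intro i
          fin_cases i
          exacts [he1, he2, he3]
  · -- the decomposition of `f`
    intro x δ
    exact Stmt15Aux.f_decomp f hP x δ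
end
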